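/- arXiv:2303.01604 — 3 statements merged into one kernel-verified Lean document; each statement's English description precedes it below -/
import Mathlib

section
/- Let E be a nonzero finite-dimensional ultrametrically normed vector space over a trivially valued field K, and define the minimal slope μ_min(E) := -log(sup_{x∈E} ‖x‖). Then for any exact sequence 0 → F → E → G → 0 of K-vector spaces, with F given the restricted norm and G the quotient norm, one has μ_min(E) = min(μ_min(F), μ_min(G)). -/
open Classical

section Aux
variable {K E : Type*} [Field K] [AddCommGroup E] [Module K E]
  (nrm : E → ℝ)
  (h_nonneg : ∀ s : E, 0 ≤ nrm s)
  (h_eq_zero : ∀ s : E, nrm s = 0 ↔ s = 0)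
  (h_ultra : ∀ s t : E, nrm (s + t) ≤ max (nrm s) (nrm t))
  (h_smul : ∀ (c : K) (s : E), c ≠ 0 → nrm (c • s) = nrm s)

include h_eq_zero in
lemma nrm_zero : nrm (0 : E) = 0 := (h_eq_zero 0).mpr rfl

include h_smul in
lemma nrm_neg (s : E) : nrm (-s) = nrm s := by
  have := h_smul (-1 : K) s (by norm_num)
  simpa using this

include h_ultra h_smul in
lemma nrm_add_eq_of_lt {s t : E} (h : nrm t < nrm s) : nrm (s + t) = nrm s := by
  refine le_antisymm (le_trans (h_ultra s t) (by simp [h.le])) ?_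
  have key : nrm s ≤ max (nrm (s + t)) (nrm t) := by
    have h2 := h_ultra (s + t) (-t)
    rw [nrm_neg nrm h_smul] at h2
    simpa using h2
  rcases le_max_iff.mp key with h1 | h1
  · exact h1
  · exact absurd h1 (not_le.mpr h)

include h_eq_zero h_ultra in
lemma nrm_sum_le {ι : Type*} (s : Finset ι) (f : ι → E) (B : ℝ) (hB : 0 ≤ B)
    (h : ∀ i ∈ s, nrm (f i) ≤ B) : nrm (∑ i ∈ s, f i) ≤ B := by
  classical
  induction s using Finset.induction with
  | empty => simpa [nrm_zero nrm h_eq_zero] using hB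
  | @insert a t hx ih =>
    rw [Finset.sum_insert hx]
    exact le_trans (h_ultra _ _) (max_le (h a (by simp)) (ih fun i hi => h i (by simp [hi])))

include h_nonneg h_eq_zero h_ultra h_smul in
lemma nrm_range_finite [FiniteDimensional K E] : (Set.range nrm).Finite := by
  by_contra hinf
  have hS : (Set.range nrm \ {0}).Infinite := by
    intro hfin
    exact hinf ((hfin.union (Set.finite_singleton 0)).subset
      (by intro x hx; by_cases h : x = 0 <;> simp [h, hx]))
  haveI := hS.to_subtype
  have hw : ∀ i : (Set.range nrm \ {0} : Set ℝ), ∃ x : E, nrm x = i := fun i => i.2.1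
  choose v hv using hw
  have hli : LinearIndependent K v := by
    rw [linearIndependent_iff']
    intro t g hsum j hj
    by_contra hgj
    set u := t.filter (fun i => g i ≠ 0) with hu
    have hju : j ∈ u := Finset.mem_filter.mpr ⟨hj, hgj⟩
    have hgu : ∀ i ∈ u, g i ≠ 0 := fun i hi => (Finset.mem_filter.mp hi).2
    have hsum' : ∑ i ∈ u, g i • v i = 0 := by
      rw [← hsum]
      exact Finset.sum_filter_of_ne (fun i _ h => by
        intro hg; exact h (by rw [hg, zero_smul]))
    obtain ⟨m, hm, hmax⟩ := Finset.exists_max_image u (fun i => nrm (v i)) ⟨j, hju⟩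
    have hvm_pos : 0 < nrm (v m) := by
      refine lt_of_le_of_ne (h_nonneg _) fun h0 => ?_
      exact m.2.2 (by rw [← hv m, ← h0]; rfl)
    have hstrict : ∀ i ∈ u.erase m, nrm (v i) < nrm (v m) := by
      intro i hi
      refine lt_of_le_of_ne (hmax i (Finset.mem_of_mem_erase hi)) fun h => ?_
      exact (Finset.mem_erase.mp hi).1 (Subtype.ext (by rw [← hv i, ← hv m, h]))
    have hrest : nrm (∑ i ∈ u.erase m, g i • v i) < nrm (v m) := by
      rcases (u.erase m).eq_empty_or_nonempty with he | hne
      · rw [he]; simpa [nrm_zero nrm h_eq_zero] using hvm_pos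
      · obtain ⟨i0, hi0, hB⟩ := Finset.exists_mem_eq_sup' hne (fun i => nrm (v i))
        refine lt_of_le_of_lt (nrm_sum_le nrm h_eq_zero h_ultra _ _ (nrm (v i0))
          (h_nonneg _) ?_) (hstrict i0 hi0)
        intro i hi
        rw [h_smul (g i) (v i) (hgu i (Finset.mem_of_mem_erase hi)), ← hB]
        exact Finset.le_sup' (fun i => nrm (v i)) hi
    have heq : nrm (∑ i ∈ u, g i • v i) = nrm (v m) := by
      rw [← Finset.add_sum_erase u _ hm]
      have hlt : nrm (∑ i ∈ u.erase m, g i • v i) < nrm (g m • v m) := by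
        rwa [h_smul (g m) (v m) (hgu m hm)]
      rw [nrm_add_eq_of_lt (K := K) nrm h_ultra h_smul hlt, h_smul (g m) (v m) (hgu m hm)]
    rw [hsum', nrm_zero nrm h_eq_zero] at heq
    exact absurd heq.symm (ne_of_gt hvm_pos)
  exact Module.Finite.not_linearIndependent_of_infinite v hli

end Aux

/-- For a nonzero finite-dimensional ultrametrically normed vector space `E`
over a trivially valued field, with minimal slope `μ_min = -log (sup of the norm)`
(`+∞` for the zero space), and an exact sequence `0 → F → E → E⧸F → 0` with restricted
and quotient norms, one has `μ_min(E) = min (μ_min F) (μ_min (E⧸F))`. -/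
theorem muMin_eq_min_of_exact
    {K E : Type*} [Field K] [AddCommGroup E] [Module K E] [FiniteDimensional K E]
    [Nontrivial E]
    (nrm : E → ℝ)
    (h_nonneg : ∀ s : E, 0 ≤ nrm s)
    (h_eq_zero : ∀ s : E, nrm s = 0 ↔ s = 0)
    (h_ultra : ∀ s t : E, nrm (s + t) ≤ max (nrm s) (nrm t))
    (h_smul : ∀ (c : K) (s : E), c ≠ 0 → nrm (c • s) = nrm s)
    (F : Submodule K E) :
    ((-Real.log (sSup (Set.range nrm)) : ℝ) : EReal) =
      min
        (if F = ⊥ then (⊤ : EReal)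
          else ((-Real.log (sSup (nrm '' (F : Set E))) : ℝ) : EReal))
        (if F = ⊤ then (⊤ : EReal)
          else ((-Real.log (sSup (Set.range (fun q : E ⧸ F =>
            sInf (nrm '' {z : E | (Submodule.Quotient.mk z : E ⧸ F) = q})))) : ℝ) : EReal)) := by
  have hfin : (Set.range nrm).Finite := nrm_range_finite nrm h_nonneg h_eq_zero h_ultra h_smul
  set qn : E ⧸ F → ℝ := fun q => sInf (nrm '' {z : E | (Submodule.Quotient.mk z : E ⧸ F) = q})
    with hqn
  set M := sSup (Set.range nrm) with hM
  set MF := sSup (nrm '' (F : Set E)) with hMF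
  set MG := sSup (Set.range qn) with hMG
  -- basic facts about cosets
  have hcoset_ne : ∀ q : E ⧸ F, (nrm '' {z : E | (Submodule.Quotient.mk z : E ⧸ F) = q}).Nonempty := by
    intro q
    obtain ⟨z, hz⟩ := Submodule.Quotient.mk_surjective F q
    exact ⟨nrm z, z, hz, rfl⟩
  have hcoset_fin : ∀ q : E ⧸ F,
      (nrm '' {z : E | (Submodule.Quotient.mk z : E ⧸ F) = q}).Finite :=
    fun q => hfin.subset (by rintro _ ⟨z, _, rfl⟩; exact ⟨z, rfl⟩)
  have hqn_mem : ∀ q : E ⧸ F, qn q ∈ nrm '' {z : E | (Submodule.Quotient.mk z : E ⧸ F) = q} :=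
    fun q => Set.Nonempty.csInf_mem (hcoset_ne q) (hcoset_fin q)
  have hqn_le : ∀ (q : E ⧸ F) (z : E), (Submodule.Quotient.mk z : E ⧸ F) = q → qn q ≤ nrm z := by
    intro q z hz
    exact csInf_le ⟨0, by rintro _ ⟨x, _, rfl⟩; exact h_nonneg x⟩ ⟨z, hz, rfl⟩
  -- range of qn is finite
  have hqnrange_fin : (Set.range qn).Finite := by
    refine hfin.subset ?_
    rintro _ ⟨q, rfl⟩
    obtain ⟨z, _, hz⟩ := hqn_mem q
    exact ⟨z, hz⟩
  have hFim_fin : (nrm '' (F : Set E)).Finite :=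
    hfin.subset (by rintro _ ⟨z, _, rfl⟩; exact ⟨z, rfl⟩)
  have hFim_ne : (nrm '' (F : Set E)).Nonempty := ⟨nrm 0, 0, F.zero_mem, rfl⟩
  -- sups compare
  have hM_mem : M ∈ Set.range nrm := Set.Nonempty.csSup_mem ⟨nrm 0, 0, rfl⟩ hfin
  have hle_M : ∀ x : E, nrm x ≤ M := fun x => le_csSup hfin.bddAbove ⟨x, rfl⟩
  have hM_pos : 0 < M := by
    obtain ⟨x, hx⟩ := exists_ne (0 : E)
    exact lt_of_lt_of_le (lt_of_le_of_ne (h_nonneg x)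
      (fun h0 => hx ((h_eq_zero x).mp h0.symm))) (hle_M x)
  have hMF_le : MF ≤ M := csSup_le hFim_ne (by rintro _ ⟨z, _, rfl⟩; exact hle_M z)
  have hMF_nonneg : 0 ≤ MF :=
    le_trans (le_of_eq (nrm_zero nrm h_eq_zero).symm)
      (le_csSup hFim_fin.bddAbove ⟨0, F.zero_mem, rfl⟩)
  have hMG_le : MG ≤ M := by
    refine csSup_le ⟨qn 0, 0, rfl⟩ ?_
    rintro _ ⟨q, rfl⟩
    obtain ⟨z, _, hz⟩ := hqn_mem q
    exact hz ▸ hle_M z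
  have hMG_nonneg : 0 ≤ MG := by
    refine le_trans ?_ (le_csSup hqnrange_fin.bddAbove ⟨0, rfl⟩)
    obtain ⟨z, _, hz⟩ := hqn_mem 0
    exact hz ▸ h_nonneg z
  -- key: M ≤ max MF MG
  have hkey : M ≤ max MF MG := by
    obtain ⟨x0, hx0⟩ := hM_mem
    obtain ⟨z, hz, hznrm⟩ := hqn_mem (Submodule.Quotient.mk x0)
    have hzF : x0 - z ∈ F := by
      rw [← Submodule.Quotient.eq]
      exact hz.symm
    have hx0eq : z + (x0 - z) = x0 := by abel
    have hult : nrm x0 ≤ max (nrm z) (nrm (x0 - z)) := by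
      have := h_ultra z (x0 - z)
      rwa [hx0eq] at this
    calc M = nrm x0 := hx0.symm
      _ ≤ max (nrm z) (nrm (x0 - z)) := hult
      _ ≤ max MF MG := by
          refine max_le (le_trans ?_ (le_max_right _ _)) (le_trans ?_ (le_max_left _ _))
          · exact hznrm ▸ le_csSup hqnrange_fin.bddAbove ⟨_, rfl⟩
          · exact le_csSup hFim_fin.bddAbove ⟨x0 - z, hzF, rfl⟩
  by_cases hFbot : F = ⊥
  · -- MF = 0, so M = MG
    rw [if_pos hFbot, if_neg (by rw [hFbot]; exact bot_ne_top)]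
    have hMF0 : MF = 0 := by
      rw [hMF, hFbot]
      simp [nrm_zero nrm h_eq_zero]
    have hMG_eq : MG = M := le_antisymm hMG_le (by
      have := hkey
      rw [hMF0, max_eq_right hMG_nonneg] at this
      exact this)
    rw [min_eq_right le_top, hMG_eq]
  by_cases hFtop : F = ⊤
  · -- MG = 0, so M = MF
    rw [if_neg hFbot, if_pos hFtop]
    have hqn0 : ∀ q : E ⧸ F, qn q = 0 := by
      intro q
      have hsub : Subsingleton (E ⧸ F) := (Submodule.Quotient.subsingleton_iff (p := F)).mpr hFtop
      have h0mem : (0 : E) ∈ {z : E | (Submodule.Quotient.mk z : E ⧸ F) = q} :=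
        Subsingleton.elim _ _
      refine le_antisymm ?_ (le_csInf (hcoset_ne q) (by rintro _ ⟨x, _, rfl⟩; exact h_nonneg x))
      calc qn q ≤ nrm 0 := hqn_le q 0 h0mem
        _ = 0 := nrm_zero nrm h_eq_zero
    have hMG0 : MG = 0 := by
      rw [hMG]
      have : Set.range qn = {0} := by
        ext r; simp only [Set.mem_range, Set.mem_singleton_iff]
        constructor
        · rintro ⟨q, rfl⟩; exact hqn0 q
        · rintro rfl; exact ⟨0, hqn0 0⟩
      rw [this, csSup_singleton]
    have hMF_eq : MF = M := le_antisymm hMF_le (by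
      have := hkey
      rw [hMG0, max_eq_left hMF_nonneg] at this
      exact this)
    rw [min_eq_left le_top, hMF_eq]
  · -- general case
    rw [if_neg hFbot, if_neg hFtop]
    have hMF_pos : 0 < MF := by
      obtain ⟨x, hxF, hx0⟩ := Submodule.exists_mem_ne_zero_of_ne_bot hFbot
      refine lt_of_lt_of_le (lt_of_le_of_ne (h_nonneg x)
        (fun h0 => hx0 ((h_eq_zero x).mp h0.symm))) ?_
      exact le_csSup hFim_fin.bddAbove ⟨x, hxF, rfl⟩
    have hMG_pos : 0 < MG := by
      have : ∃ x : E, x ∉ F := by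
        by_contra h
        push_neg at h
        exact hFtop (Submodule.eq_top_iff'.mpr h)
      obtain ⟨x, hx⟩ := this
      obtain ⟨z, hz, hznrm⟩ := hqn_mem (Submodule.Quotient.mk x)
      have hz0 : z ≠ 0 := by
        intro h0
        have hmk : (Submodule.Quotient.mk x : E ⧸ F) = 0 := by
          have hzeq : (Submodule.Quotient.mk z : E ⧸ F) = Submodule.Quotient.mk x := hz
          rw [← hzeq, h0, Submodule.Quotient.mk_zero]
        exact hx ((Submodule.Quotient.mk_eq_zero F).mp hmk)
      refine lt_of_lt_of_le (lt_of_le_of_ne (h_nonneg z)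
        (fun h0 => hz0 ((h_eq_zero z).mp h0.symm))) ?_
      exact hznrm ▸ le_csSup hqnrange_fin.bddAbove ⟨_, rfl⟩
    have hMmax : M = max MF MG := le_antisymm hkey (max_le hMF_le hMG_le)
    have hmono : Monotone (fun r : ℝ => (r : EReal)) := fun a b h => EReal.coe_le_coe_iff.mpr h
    rw [← hmono.map_min]
    congr 1
    rcases le_total MF MG with hle | hle
    · rw [hMmax, max_eq_right hle, min_eq_right (neg_le_neg
        ((Real.log_le_log_iff hMF_pos hMG_pos).mpr hle))]
    · rw [hMmax, max_eq_left hle, min_eq_left (neg_le_neg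
        ((Real.log_le_log_iff hMG_pos hMF_pos).mpr hle))]
end

section
/- The construction sending an R-filtration F on a finite-dimensional K-vector space E to the ultrametric norm ‖s‖_F = exp(-sup{t : s ∈ F^t E}) is a bijection between separated, exhaustive, left-continuous R-filtrations of E by subspaces and ultrametric norms on E over the trivially valued field K. -/
open Classical

/-- A separated, exhaustive, left-continuous decreasing ℝ-filtration of `E` by
`K`-subspaces. -/
structure TrivFiltration (K E : Type*) [Field K] [AddCommGroup E] [Module K E] where
  F : ℝ → Submodule K E
  mono : ∀ {t t' : ℝ}, t' ≤ t → F t ≤ F t'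
  exhaustive : ∃ t₀ : ℝ, ∀ t ≤ t₀, F t = ⊤
  separated : ∃ t₁ : ℝ, ∀ t, t₁ ≤ t → F t = ⊥
  leftCont : ∀ t : ℝ, F t = ⨅ t' < t, F t'

/-- An ultrametric norm on `E` over the trivially valued field `K`. -/
structure TrivNorm (K E : Type*) [Field K] [AddCommGroup E] [Module K E] where
  nrm : E → ℝ
  nonneg : ∀ s : E, 0 ≤ nrm s
  eq_zero : ∀ s : E, nrm s = 0 ↔ s = 0
  ultra : ∀ s t : E, nrm (s + t) ≤ max (nrm s) (nrm t)
  smul_eq : ∀ (c : K) (s : E), c ≠ 0 → nrm (c • s) = nrm s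

namespace FNBij

variable {K E : Type*} [Field K] [AddCommGroup E] [Module K E]

/-- The set of filtration times containing `s`. -/
def A (Fil : TrivFiltration K E) (s : E) : Set ℝ := {t : ℝ | s ∈ Fil.F t}

lemma A_down (Fil : TrivFiltration K E) (s : E) {t t' : ℝ} (h : t' ≤ t)
    (ht : t ∈ A Fil s) : t' ∈ A Fil s := Fil.mono h ht

lemma A_nonempty (Fil : TrivFiltration K E) (s : E) : (A Fil s).Nonempty := by
  obtain ⟨t₀, ht₀⟩ := Fil.exhaustive
  exact ⟨t₀, by simp [A, ht₀ t₀ le_rfl]⟩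

lemma A_bddAbove (Fil : TrivFiltration K E) {s : E} (hs : s ≠ 0) :
    BddAbove (A Fil s) := by
  obtain ⟨t₁, ht₁⟩ := Fil.separated
  refine ⟨t₁, fun t ht => ?_⟩
  by_contra h
  push_neg at h
  have := ht₁ t h.le
  rw [A, Set.mem_setOf_eq, this, Submodule.mem_bot] at ht
  exact hs ht

lemma sSup_mem_A (Fil : TrivFiltration K E) {s : E} (hs : s ≠ 0) :
    sSup (A Fil s) ∈ A Fil s := by
  have hne := A_nonempty Fil s
  show s ∈ Fil.F (sSup (A Fil s))
  rw [Fil.leftCont]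
  simp only [Submodule.mem_iInf]
  intro t' ht'
  obtain ⟨a, ha, hta⟩ := exists_lt_of_lt_csSup hne ht'
  exact A_down Fil s hta.le ha

lemma mem_A_iff (Fil : TrivFiltration K E) {s : E} (hs : s ≠ 0) (t : ℝ) :
    t ∈ A Fil s ↔ t ≤ sSup (A Fil s) := by
  constructor
  · exact fun h => le_csSup (A_bddAbove Fil hs) h
  · exact fun h => A_down Fil s h (sSup_mem_A Fil hs)

/-- The norm associated to a filtration. -/
noncomputable def nrmOf (Fil : TrivFiltration K E) (s : E) : ℝ :=
  if s = 0 then 0 else Real.exp (-(sSup (A Fil s)))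

lemma nrmOf_le_iff (Fil : TrivFiltration K E) (s : E) (t : ℝ) :
    nrmOf Fil s ≤ Real.exp (-t) ↔ s ∈ Fil.F t := by
  by_cases hs : s = 0
  · simp [nrmOf, hs, (Real.exp_pos _).le, Submodule.zero_mem]
  · rw [nrmOf, if_neg hs, Real.exp_le_exp, neg_le_neg_iff]
    exact ((mem_A_iff Fil hs t).symm : _)

lemma nrmOf_nonneg (Fil : TrivFiltration K E) (s : E) : 0 ≤ nrmOf Fil s := by
  unfold nrmOf; split
  · exact le_rfl
  · exact (Real.exp_pos _).le

lemma nrmOf_eq_zero (Fil : TrivFiltration K E) (s : E) : nrmOf Fil s = 0 ↔ s = 0 := by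
  unfold nrmOf; split
  · simpa
  · next h => simp [h, Real.exp_ne_zero]

lemma nrmOf_smul (Fil : TrivFiltration K E) (c : K) (s : E) (hc : c ≠ 0) :
    nrmOf Fil (c • s) = nrmOf Fil s := by
  have hA : A Fil (c • s) = A Fil s := by
    ext t
    constructor
    · intro h
      have : s ∈ Fil.F t := by
        have := (Fil.F t).smul_mem c⁻¹ h
        rwa [inv_smul_smul₀ hc] at this
      exact this
    · exact fun h => (Fil.F t).smul_mem c h
  unfold nrmOf
  rw [hA, smul_eq_zero]
  simp [hc]

lemma nrmOf_ultra (Fil : TrivFiltration K E) (s t : E) :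
    nrmOf Fil (s + t) ≤ max (nrmOf Fil s) (nrmOf Fil t) := by
  by_cases hs : s = 0
  · simp [hs, le_max_iff, le_refl]
  by_cases ht : t = 0
  · simp [ht, le_max_iff, le_refl]
  by_cases hst : s + t = 0
  · rw [nrmOf, if_pos hst]
    exact le_max_of_le_left (nrmOf_nonneg Fil s)
  set a := sSup (A Fil s)
  set b := sSup (A Fil t)
  have hsm : s ∈ Fil.F (min a b) :=
    A_down Fil s (min_le_left a b) (sSup_mem_A Fil hs)
  have htm : t ∈ Fil.F (min a b) :=
    A_down Fil t (min_le_right a b) (sSup_mem_A Fil ht)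
  have hmem : min a b ∈ A Fil (s + t) := (Fil.F (min a b)).add_mem hsm htm
  have hle : min a b ≤ sSup (A Fil (s + t)) :=
    le_csSup (A_bddAbove Fil hst) hmem
  rw [nrmOf, if_neg hst, nrmOf, if_neg hs, nrmOf, if_neg ht]
  calc Real.exp (-(sSup (A Fil (s + t)))) ≤ Real.exp (-(min a b)) := by
        rw [Real.exp_le_exp]; linarith
    _ = max (Real.exp (-a)) (Real.exp (-b)) := by
        rcases le_total a b with h | h
        · rw [min_eq_left h, max_eq_left (Real.exp_le_exp.mpr (by linarith))]
        · rw [min_eq_right h, max_eq_right (Real.exp_le_exp.mpr (by linarith))]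

/-- The norm associated to a filtration, as a `TrivNorm`. -/
noncomputable def toNorm (Fil : TrivFiltration K E) : TrivNorm K E where
  nrm := nrmOf Fil
  nonneg := nrmOf_nonneg Fil
  eq_zero := nrmOf_eq_zero Fil
  ultra := nrmOf_ultra Fil
  smul_eq := fun c s hc => nrmOf_smul Fil c s hc

/-- The filtration associated to a norm. -/
def filtOf (N : TrivNorm K E) (t : ℝ) : Submodule K E where
  carrier := {s : E | N.nrm s ≤ Real.exp (-t)}
  zero_mem' := by
    simp only [Set.mem_setOf_eq, (N.eq_zero 0).mpr rfl]
    exact (Real.exp_pos _).le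
  add_mem' := fun {x y} hx hy =>
    le_trans (N.ultra x y) (max_le hx hy)
  smul_mem' := by
    intro c x hx
    by_cases hc : c = 0
    · simp only [hc, zero_smul, Set.mem_setOf_eq, (N.eq_zero 0).mpr rfl]
      exact (Real.exp_pos _).le
    · simpa only [Set.mem_setOf_eq, N.smul_eq c x hc] using hx

lemma filtOf_mono (N : TrivNorm K E) {t t' : ℝ} (h : t' ≤ t) :
    filtOf N t ≤ filtOf N t' := by
  intro x hx
  exact le_trans hx (Real.exp_le_exp.mpr (by linarith))

lemma filtOf_exhaustive [FiniteDimensional K E] (N : TrivNorm K E) :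
    ∃ t₀ : ℝ, ∀ t ≤ t₀, filtOf N t = ⊤ := by
  obtain ⟨n, b⟩ : ∃ n, Nonempty (Module.Basis (Fin n) K E) :=
    ⟨Module.finrank K E, ⟨Module.finBasis K E⟩⟩
  obtain ⟨b⟩ := b
  set M : ℝ := 1 + ∑ i, N.nrm (b i) with hM
  have hM1 : (1 : ℝ) ≤ M := by
    have : 0 ≤ ∑ i, N.nrm (b i) := Finset.sum_nonneg fun i _ => N.nonneg _
    linarith
  have hMpos : 0 < M := lt_of_lt_of_le one_pos hM1
  have hball : ∀ s : E, N.nrm s ≤ M := by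
    intro s
    -- the set of vectors of norm ≤ M is a submodule containing a basis
    let p : Submodule K E :=
      { carrier := {s : E | N.nrm s ≤ M}
        zero_mem' := by
          simp only [Set.mem_setOf_eq, (N.eq_zero 0).mpr rfl]; linarith
        add_mem' := fun {x y} hx hy => le_trans (N.ultra x y) (max_le hx hy)
        smul_mem' := by
          intro c x hx
          by_cases hc : c = 0
          · simp only [hc, zero_smul, Set.mem_setOf_eq, (N.eq_zero 0).mpr rfl]
            linarith
          · simpa only [Set.mem_setOf_eq, N.smul_eq c x hc] using hx }
    have hbp : ∀ i, b i ∈ p := by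
      intro i
      show N.nrm (b i) ≤ M
      rw [hM]
      have h1 : N.nrm (b i) ≤ ∑ j, N.nrm (b j) :=
        Finset.single_le_sum (fun j _ => N.nonneg (b j)) (Finset.mem_univ i)
      linarith
    have : (⊤ : Submodule K E) ≤ p := by
      rw [← b.span_eq]
      rw [Submodule.span_le]
      rintro _ ⟨i, rfl⟩
      exact hbp i
    exact this Submodule.mem_top
  refine ⟨-Real.log M, fun t ht => ?_⟩
  rw [eq_top_iff]
  intro s _
  show N.nrm s ≤ Real.exp (-t)
  calc N.nrm s ≤ M := hball s
    _ = Real.exp (Real.log M) := (Real.exp_log hMpos).symm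
    _ ≤ Real.exp (-t) := Real.exp_le_exp.mpr (by linarith)

lemma filtOf_separated [FiniteDimensional K E] (N : TrivNorm K E) :
    ∃ t₁ : ℝ, ∀ t, t₁ ≤ t → filtOf N t = ⊥ := by
  obtain ⟨P, ⟨t₁, rfl⟩, hmin⟩ := IsArtinian.set_has_minimal
    (Set.range (filtOf N)) (Set.range_nonempty _)
  have hbot : filtOf N t₁ = ⊥ := by
    rw [eq_bot_iff]
    intro s hs
    rw [Submodule.mem_bot]
    by_contra hs0
    have hpos : 0 < N.nrm s := lt_of_le_of_ne (N.nonneg s) (Ne.symm (fun h => hs0 ((N.eq_zero s).mp h)))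
    set t₂ : ℝ := max t₁ (1 - Real.log (N.nrm s)) with ht₂
    have hlt : filtOf N t₂ < filtOf N t₁ := by
      refine lt_of_le_of_ne (filtOf_mono N (le_max_left _ _)) (fun h => ?_)
      have hs2 : s ∈ filtOf N t₂ := h ▸ hs
      have : N.nrm s ≤ Real.exp (-t₂) := hs2
      have h2 : Real.exp (-t₂) ≤ Real.exp (Real.log (N.nrm s) - 1) := by
        apply Real.exp_le_exp.mpr
        have := le_max_right t₁ (1 - Real.log (N.nrm s))
        linarith
      have h3 : Real.exp (Real.log (N.nrm s) - 1) < N.nrm s := by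
        rw [Real.exp_sub, Real.exp_log hpos]
        have he : 1 < Real.exp 1 := by
          have := Real.add_one_lt_exp (x := 1) one_ne_zero
          linarith
        rw [div_lt_iff₀ (by positivity)]
        nlinarith
      linarith
    exact hmin _ ⟨t₂, rfl⟩ hlt
  exact ⟨t₁, fun t ht => le_bot_iff.mp (hbot ▸ filtOf_mono N ht)⟩

lemma filtOf_leftCont (N : TrivNorm K E) (t : ℝ) :
    filtOf N t = ⨅ t' < t, filtOf N t' := by
  apply le_antisymm
  · exact le_iInf fun t' => le_iInf fun ht' => filtOf_mono N ht'.le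
  · intro s hs
    simp only [Submodule.mem_iInf] at hs
    show N.nrm s ≤ Real.exp (-t)
    by_contra h
    push_neg at h
    have hpos : 0 < N.nrm s := lt_trans (Real.exp_pos _) h
    have h1 : -Real.log (N.nrm s) < t := by
      have := Real.log_lt_log (Real.exp_pos _) h
      rw [Real.log_exp] at this
      linarith
    set t' : ℝ := (-Real.log (N.nrm s) + t) / 2 with ht'
    have h2 : t' < t := by rw [ht']; linarith
    have h3 : -Real.log (N.nrm s) < t' := by rw [ht']; linarith
    have h4 : N.nrm s ≤ Real.exp (-t') := hs t' h2
    have h5 : Real.exp (-t') < N.nrm s := by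
      have : -t' < Real.log (N.nrm s) := by linarith
      calc Real.exp (-t') < Real.exp (Real.log (N.nrm s)) := Real.exp_lt_exp.mpr this
        _ = N.nrm s := Real.exp_log hpos
    linarith

/-- The filtration associated to a norm, as a `TrivFiltration`. -/
noncomputable def toFilt [FiniteDimensional K E] (N : TrivNorm K E) : TrivFiltration K E where
  F := filtOf N
  mono := fun h => filtOf_mono N h
  exhaustive := filtOf_exhaustive N
  separated := filtOf_separated N
  leftCont := filtOf_leftCont N

lemma left_inv [FiniteDimensional K E] (Fil : TrivFiltration K E) :
    toFilt (toNorm Fil) = Fil := by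
  obtain ⟨F, mono, exh, sep, lc⟩ := Fil
  simp only [toFilt, TrivFiltration.mk.injEq]
  funext t
  ext s
  exact nrmOf_le_iff ⟨F, mono, exh, sep, lc⟩ s t

lemma right_inv [FiniteDimensional K E] (N : TrivNorm K E) :
    toNorm (toFilt N) = N := by
  obtain ⟨nrm, nonneg, eqz, ultra, smul⟩ := N
  simp only [toNorm, TrivNorm.mk.injEq]
  funext s
  by_cases hs : s = 0
  · simp [nrmOf, hs, (eqz 0).mpr rfl]
  · have hpos : 0 < nrm s :=
      lt_of_le_of_ne (nonneg s) (Ne.symm (fun h => hs ((eqz s).mp h)))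
    have hA : A (toFilt ⟨nrm, nonneg, eqz, ultra, smul⟩) s = Set.Iic (-Real.log (nrm s)) := by
      ext t
      show nrm s ≤ Real.exp (-t) ↔ t ≤ -Real.log (nrm s)
      rw [← Real.exp_log hpos, Real.exp_le_exp, Real.log_exp]
      constructor <;> intro h <;> linarith
    rw [nrmOf, if_neg hs, hA, csSup_Iic, neg_neg, Real.exp_log hpos]

end FNBij

/-- The assignment `F ↦ ‖·‖_F`, `‖s‖_F = exp(-sup{t | s ∈ F^t E})`, is a
bijection between separated exhaustive left-continuous ℝ-filtrations of a
finite-dimensional `K`-vector space `E` and ultrametric norms on `E` over the trivially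
valued field `K`; the inverse sends a norm `‖·‖` to `F^t E = {s | ‖s‖ ≤ exp(-t)}`. -/
theorem filtration_norm_bijection
    (K E : Type*) [Field K] [AddCommGroup E] [Module K E] [FiniteDimensional K E] :
    ∃ e : TrivFiltration K E ≃ TrivNorm K E,
      (∀ (Fil : TrivFiltration K E) (s : E),
        (e Fil).nrm s = if s = 0 then 0 else Real.exp (-(sSup {t : ℝ | s ∈ Fil.F t}))) ∧
      (∀ (N : TrivNorm K E) (t : ℝ),
        ((e.symm N).F t : Set E) = {s : E | N.nrm s ≤ Real.exp (-t)}) := by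
  refine ⟨⟨FNBij.toNorm, FNBij.toFilt, FNBij.left_inv, FNBij.right_inv⟩, ?_, ?_⟩
  · intro Fil s
    rfl
  · intro N t
    rfl
end

section
/- Let (a_m)_{m≥1} be a sequence of real numbers and δ: N → R a function with δ(nm)/m → 0 as m → ∞ for each fixed n, such that for all l ≥ 2 and m₁,…,m_l ∈ N₊ one has a_{m₁+⋯+m_l} ≥ a_{m₁} + ⋯ + a_{m_l} − Σᵢ δ(mᵢ). If (a_m/m) is bounded above, then the sequence (a_m/m) converges in R. -/
open Filter

lemma fekete_key (a : ℕ → ℝ) (δ : ℕ → ℝ)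
    (hsuper : ∀ (l : ℕ), 2 ≤ l → ∀ ms : Fin l → ℕ, (∀ i, 1 ≤ ms i) →
      a (∑ i, ms i) ≥ (∑ i, a (ms i)) - ∑ i, δ (ms i))
    (n : ℕ) (hn : 1 ≤ n) (q : ℕ) (hq : 1 ≤ q) (r : ℕ) (hr : 1 ≤ r) :
    a (q * n + r) ≥ (q : ℝ) * a n + a r - ((q : ℝ) * δ n + δ r) := by
  have h := hsuper (q + 1) (by omega) (Fin.snoc (fun _ => n) r) ?_
  · simp only [Fin.sum_univ_castSucc, Fin.snoc_castSucc, Fin.snoc_last,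
      Finset.sum_const, Finset.card_univ, Fintype.card_fin, smul_eq_mul,
      nsmul_eq_mul] at h
    exact_mod_cast h
  · intro i
    refine Fin.lastCases ?_ ?_ i
    · simpa using hr
    · intro j; simpa using hn

lemma fekete_lower (a : ℕ → ℝ) (δ : ℕ → ℝ)
    (hsuper : ∀ (l : ℕ), 2 ≤ l → ∀ ms : Fin l → ℕ, (∀ i, 1 ≤ ms i) →
      a (∑ i, ms i) ≥ (∑ i, a (ms i)) - ∑ i, δ (ms i))
    (n : ℕ) (hn : 1 ≤ n) (ε : ℝ) (hε : 0 < ε) :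
    ∃ N : ℕ, ∀ m ≥ N, (a n - δ n) / (n : ℝ) - ε ≤ a m / (m : ℝ) := by
  have hn0 : (0 : ℝ) < n := by exact_mod_cast hn
  set c : ℝ := (a n - δ n) / n with hc
  have hne : (Finset.Icc n (2 * n)).Nonempty := ⟨n, Finset.mem_Icc.2 (by omega)⟩
  set D : ℝ := (Finset.Icc n (2 * n)).sup' hne (fun r => |a r - δ r|) with hD
  have hmemn : n ∈ Finset.Icc n (2 * n) := Finset.mem_Icc.2 ⟨le_rfl, by omega⟩
  have hD0 : 0 ≤ D := le_trans (abs_nonneg (a n - δ n))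
    (Finset.le_sup' (fun r => |a r - δ r|) hmemn)
  set K : ℝ := 2 * n * |c| + D with hK
  have main : ∀ m : ℕ, 2 * n ≤ m → c - K / m ≤ a m / m := by
    intro m hm
    have hm0 : (0 : ℝ) < m := by exact_mod_cast (by omega : 0 < m)
    have hdiv : 2 ≤ m / n := (Nat.le_div_iff_mul_le (by omega)).2 (by omega)
    obtain ⟨q, hq2⟩ : ∃ q, m / n = q + 1 := ⟨m / n - 1, by omega⟩
    have hq1 : 1 ≤ q := by omega
    have hmod := Nat.mod_lt m (show 0 < n by omega)
    have hr1 : 1 ≤ m % n + n := by omega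
    have hrle : m % n + n ≤ 2 * n := by omega
    have h1 := Nat.div_add_mod m n
    have hqnr : q * n + (m % n + n) = m := by
      have h3 : q * n + (m % n + n) = n * (q + 1) + m % n := by ring
      rw [h3, ← hq2]; exact h1
    have key := fekete_key a δ hsuper n hn q hq1 (m % n + n) hr1
    rw [hqnr] at key
    set r := m % n + n with hrdef
    have hmem : r ∈ Finset.Icc n (2 * n) := Finset.mem_Icc.2 (by omega)
    have hDr : |a r - δ r| ≤ D := Finset.le_sup' (fun s => |a s - δ s|) hmem
    have hDr' : -D ≤ a r - δ r := by
      have := neg_abs_le (a r - δ r); linarith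
    have hr' : (r : ℝ) ≤ 2 * n := by exact_mod_cast hrle
    have hr0 : (0 : ℝ) ≤ r := by positivity
    have hqn : (q : ℝ) * n = (m : ℝ) - r := by
      have : ((q * n + r : ℕ) : ℝ) = (m : ℝ) := by exact_mod_cast hqnr
      push_cast at this; linarith
    have hcn : a n - δ n = n * c := by rw [hc]; field_simp
    have e1 : (q : ℝ) * a n - (q : ℝ) * δ n = (q : ℝ) * ((n : ℝ) * c) := by
      rw [← hcn]; ring
    have e2 : (q : ℝ) * ((n : ℝ) * c) = ((m : ℝ) - r) * c := by
      rw [← hqn]; ring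
    have key2 : a m ≥ ((m : ℝ) - r) * c + (a r - δ r) := by linarith [key, e1, e2]
    have e3 : ((m : ℝ) - r) * c = (m : ℝ) * c - (r : ℝ) * c := by ring
    have h5 : (r : ℝ) * c ≤ 2 * n * |c| := by
      calc (r : ℝ) * c ≤ (r : ℝ) * |c| := by
            exact mul_le_mul_of_nonneg_left (le_abs_self c) hr0
        _ ≤ 2 * n * |c| := mul_le_mul_of_nonneg_right hr' (abs_nonneg c)
    have hgoal : c * m - K ≤ a m := by linarith [key2, e3, h5, hDr']
    have heq : c - K / m = (c * m - K) / m := by field_simp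
    rw [heq]
    gcongr
  have hK0 : 0 ≤ K := by positivity
  have ht : Tendsto (fun m : ℕ => K / m) atTop (nhds 0) := by
    simpa [mul_one_div, div_eq_mul_inv] using tendsto_one_div_atTop_nhds_zero_nat.const_mul K
  have hev : ∀ᶠ m : ℕ in atTop, K / m < ε := ht.eventually_lt_const hε
  obtain ⟨N0, hN0⟩ := eventually_atTop.1 hev
  refine ⟨max N0 (2 * n), fun m hm => ?_⟩
  have h1 := main m (le_trans (le_max_right _ _) hm)
  have h2 := hN0 m (le_trans (le_max_left _ _) hm)
  linarith

/-- generalized Fekete lemma: if `a` is superadditive up to penalties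
`δ(mᵢ)` per summand, with `δ(nm)/m → 0` for each fixed `n`, and `a m / m` is bounded
above, then `a m / m` converges. -/
theorem generalized_fekete
    (a : ℕ → ℝ) (δ : ℕ → ℝ)
    (hδ : ∀ n : ℕ, Tendsto (fun m : ℕ => δ (n * m) / (m : ℝ)) atTop (nhds 0))
    (hsuper : ∀ (l : ℕ), 2 ≤ l → ∀ ms : Fin l → ℕ, (∀ i, 1 ≤ ms i) →
      a (∑ i, ms i) ≥ (∑ i, a (ms i)) - ∑ i, δ (ms i))
    (hbdd : ∃ B : ℝ, ∀ m : ℕ, 1 ≤ m → a m / (m : ℝ) ≤ B) :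
    ∃ L : ℝ, Tendsto (fun m : ℕ => a m / (m : ℝ)) atTop (nhds L) := by
  obtain ⟨B, hB⟩ := hbdd
  have hδ1 : Tendsto (fun m : ℕ => δ m / (m : ℝ)) atTop (nhds 0) := by
    simpa using hδ 1
  have habs : Tendsto (fun m : ℕ => |δ m / (m : ℝ)|) atTop (nhds 0) := by
    simpa using hδ1.abs
  obtain ⟨C, hC⟩ := habs.bddAbove_range
  have hC' : ∀ m : ℕ, |δ m / (m : ℝ)| ≤ C := fun m => hC (Set.mem_range_self m)
  set g : ℕ → ℝ := fun k => (a (k + 1) - δ (k + 1)) / ((k + 1 : ℕ) : ℝ) with hg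
  have hSbdd : BddAbove (Set.range g) := by
    refine ⟨B + C, ?_⟩
    rintro x ⟨k, rfl⟩
    have h1 : a (k + 1) / ((k + 1 : ℕ) : ℝ) ≤ B := hB (k + 1) (by omega)
    have h2 : |δ (k + 1) / ((k + 1 : ℕ) : ℝ)| ≤ C := hC' (k + 1)
    have h3 : g k = a (k + 1) / ((k + 1 : ℕ) : ℝ) - δ (k + 1) / ((k + 1 : ℕ) : ℝ) := by
      simp only [hg, sub_div]
    have h4 := neg_abs_le (δ (k + 1) / ((k + 1 : ℕ) : ℝ))
    rw [h3]; linarith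
  set L := sSup (Set.range g) with hL
  have hmemle : ∀ m : ℕ, 1 ≤ m → (a m - δ m) / (m : ℝ) ≤ L := by
    intro m hm
    have h : (a m - δ m) / (m : ℝ) = g (m - 1) := by
      have hm' : m - 1 + 1 = m := by omega
      simp only [hg, hm']
    rw [h]
    exact le_csSup hSbdd (Set.mem_range_self _)
  refine ⟨L, ?_⟩
  rw [Metric.tendsto_atTop]
  intro ε hε
  obtain ⟨x, ⟨k, rfl⟩, hx⟩ := exists_lt_of_lt_csSup (Set.range_nonempty g)
    (show L - ε / 2 < L by linarith)
  obtain ⟨N1, hN1⟩ := fekete_lower a δ hsuper (k + 1) (by omega) (ε / 2) (by linarith)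
  obtain ⟨N2, hN2⟩ := Metric.tendsto_atTop.1 hδ1 ε hε
  refine ⟨max (max N1 N2) 1, fun m hm => ?_⟩
  have hm1 : 1 ≤ m := le_trans (le_max_right _ _) hm
  have l1 := hN1 m (le_trans (le_trans (le_max_left _ _) (le_max_left _ _)) hm)
  have l2 := hN2 m (le_trans (le_trans (le_max_right _ _) (le_max_left _ _)) hm)
  have l2' : δ m / (m : ℝ) < ε := by
    rw [Real.dist_eq, sub_zero] at l2
    exact lt_of_abs_lt l2
  have u1 : a m / (m : ℝ) ≤ L + δ m / (m : ℝ) := by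
    have h := hmemle m hm1
    have h2 : a m / (m : ℝ) = (a m - δ m) / (m : ℝ) + δ m / (m : ℝ) := by
      rw [sub_div]; ring
    linarith
  have gk : g k = (a (k + 1) - δ (k + 1)) / ((k + 1 : ℕ) : ℝ) := rfl
  rw [Real.dist_eq, abs_sub_lt_iff]
  constructor
  · linarith
  · rw [gk] at hx; linarith
end
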